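/- Assume β_t + γ̇_t > 0 for all t ∈ [0, T]. If θ_t ≤ 0 for all t (in-flow with momentum) then h_t := −ε_t⁻¹(D_t + λ_t E_t) ≥ 0 for all t ∈ [0, T]; if θ_t ≥ 0 for all t (in-flow with reversion) then h_t ≤ 0 for all t ∈ [0, T]. -/

import Mathlib

open Set MeasureTheory Matrix

/-- Market parameters: time horizon `T > 0` and bounded measurable coefficient functions
`β, λ, ε, θ, σ : [0,T] → ℝ` with `β > 0`, `σ ≥ 0`, `λ` and `ε` positive and bounded away
from zero, `λ` differentiable with bounded derivative `lam'`, and the no-arbitrage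
condition `2β_t + γ̇_t > 0` where `γ = log λ` (so `γ̇ = λ'/λ`). -/
structure Params where
  T : ℝ
  beta : ℝ → ℝ
  lam : ℝ → ℝ
  lam' : ℝ → ℝ
  eps : ℝ → ℝ
  theta : ℝ → ℝ
  sigma : ℝ → ℝ
  hT : 0 < T
  hbeta_meas : Measurable beta
  htheta_meas : Measurable theta
  hsigma_meas : Measurable sigma
  heps_meas : Measurable eps
  hbeta_bdd : ∃ M, ∀ t ∈ Icc 0 T, |beta t| ≤ M
  htheta_bdd : ∃ M, ∀ t ∈ Icc 0 T, |theta t| ≤ M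
  hsigma_bdd : ∃ M, ∀ t ∈ Icc 0 T, |sigma t| ≤ M
  hbeta_pos : ∀ t ∈ Icc 0 T, 0 < beta t
  hsigma_nonneg : ∀ t ∈ Icc 0 T, 0 ≤ sigma t
  heps_lb : ∃ c, 0 < c ∧ ∀ t ∈ Icc 0 T, c ≤ eps t
  heps_ub : ∃ M, ∀ t ∈ Icc 0 T, eps t ≤ M
  hlam_lb : ∃ c, 0 < c ∧ ∀ t ∈ Icc 0 T, c ≤ lam t
  hlam_ub : ∃ M, ∀ t ∈ Icc 0 T, lam t ≤ M
  hlam_deriv : ∀ t, HasDerivAt lam (lam' t) t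
  hlam'_bdd : ∃ M, ∀ t, |lam' t| ≤ M
  hnoarb : ∀ t ∈ Icc 0 T, 0 < 2 * beta t + lam' t / lam t

/-- `γ̇_t = λ'_t / λ_t`, the derivative of `γ = log λ`. -/
noncomputable def gammaDot (P : Params) (t : ℝ) : ℝ := P.lam' t / P.lam t

/-- The backward Riccati ODE system on `[0,T]` with its terminal conditions. -/
def IsRiccatiSol (P : Params) (A B C D E F K : ℝ → ℝ) : Prop :=
  (∀ t ∈ Icc (0:ℝ) P.T,
      HasDerivAt A ((P.eps t)⁻¹ * (A t + P.lam t * B t) ^ 2) t) ∧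
  A P.T = P.lam P.T ∧
  (∀ t ∈ Icc (0:ℝ) P.T,
      HasDerivAt B ((P.eps t)⁻¹ * (A t + P.lam t * B t) * (B t + P.lam t * C t)
        + P.beta t * B t) t) ∧
  B P.T = -1 ∧
  (∀ t ∈ Icc (0:ℝ) P.T,
      HasDerivAt C ((P.eps t)⁻¹ * (B t + P.lam t * C t) ^ 2 + 2 * P.beta t * C t
        - (P.lam t)⁻¹ * (2 * P.beta t + gammaDot P t)) t) ∧
  C P.T = (P.lam P.T)⁻¹ ∧
  (∀ t ∈ Icc (0:ℝ) P.T,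
      HasDerivAt D ((P.eps t)⁻¹ * (A t + P.lam t * B t) * (D t + P.lam t * E t)
        - P.theta t * (A t - D t)) t) ∧
  D P.T = 0 ∧
  (∀ t ∈ Icc (0:ℝ) P.T,
      HasDerivAt E ((P.eps t)⁻¹ * (B t + P.lam t * C t) * (D t + P.lam t * E t)
        - P.theta t * (B t - E t) + P.beta t * E t) t) ∧
  E P.T = 0 ∧
  (∀ t ∈ Icc (0:ℝ) P.T,
      HasDerivAt F ((P.eps t)⁻¹ * (D t + P.lam t * E t) ^ 2
        - 2 * P.theta t * (D t - F t)) t) ∧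
  F P.T = 0 ∧
  (∀ t ∈ Icc (0:ℝ) P.T,
      HasDerivAt K (-(P.sigma t) ^ 2 * (A t - 2 * D t + F t) / 2) t) ∧
  K P.T = 0


section FeedbackAux
open Filter Topology Real

lemma aux_mul_le {p w K u : ℝ} (hp : |p| ≤ K) (hw : |w| ≤ u) : p * w ≤ K * u :=
  calc p * w ≤ |p * w| := le_abs_self _
    _ = |p| * |w| := abs_mul _ _
    _ ≤ K * u := mul_le_mul hp hw (abs_nonneg _) ((abs_nonneg _).trans hp)

lemma aux_mul_le' {p w K u : ℝ} (hp0 : 0 ≤ p) (hp : p ≤ K) (hw : w ≤ u) (hu : 0 ≤ u) :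
    p * w ≤ K * u :=
  (mul_le_mul_of_nonneg_left hw hp0).trans (mul_le_mul_of_nonneg_right hp hu)

lemma abs_mul_le {a b Ma Mb : ℝ} (ha : |a| ≤ Ma) (hb : |b| ≤ Mb) : |a * b| ≤ Ma * Mb := by
  rw [abs_mul]; exact mul_le_mul ha hb (abs_nonneg _) ((abs_nonneg _).trans ha)


lemma slope_posPart_aux {g : ℝ → ℝ} {dg t η : ℝ} (h : HasDerivAt g dg t) (hη : 0 < η) :
    ∀ᶠ w in 𝓝[<] t, (t - w)⁻¹ * (max (g w) 0 - max (g t) 0)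
      < (if 0 ≤ g t then max (-dg) 0 else 0) + η := by
  rcases lt_or_ge (g t) 0 with hg | hg
  · have h1 : ∀ᶠ w in 𝓝[<] t, g w < 0 :=
      eventually_nhdsWithin_of_eventually_nhds (h.continuousAt.eventually_lt_const hg)
    filter_upwards [h1] with w hw
    rw [if_neg (not_le.2 hg), max_eq_right hw.le, max_eq_right hg.le]
    simpa using hη
  · rw [if_pos hg]
    have hmem : 𝓝[<] t ≤ 𝓝[≠] t := nhdsWithin_mono t (fun w hw => ne_of_lt hw)
    have hslope : Tendsto (fun w => -(slope g t w)) (𝓝[<] t) (𝓝 (-dg)) :=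
      ((hasDerivAt_iff_tendsto_slope.1 h).mono_left hmem).neg
    have h2 : ∀ᶠ w in 𝓝[<] t, -(slope g t w) < -dg + η :=
      hslope.eventually_lt_const (by linarith)
    filter_upwards [h2, self_mem_nhdsWithin] with w hw hwt
    have hwt' : (0:ℝ) < t - w := by simp only [mem_Iio] at hwt; linarith
    have hsl : -(slope g t w) = (t - w)⁻¹ * (g w - g t) := by
      rw [slope_def_field, inv_mul_eq_div, ← neg_div,
        div_eq_div_iff (sub_ne_zero.2 (ne_of_lt hwt)) (ne_of_gt hwt')]
      ring
    have hle : max (g w) 0 - max (g t) 0 ≤ max (g w - g t) 0 := by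
      rw [max_eq_left hg]
      have h3 := le_max_left (g w - g t) 0
      have h4 := le_max_right (g w - g t) 0
      rcases le_total (g w) 0 with h5 | h5
      · rw [max_eq_right h5]; linarith
      · rw [max_eq_left h5]; linarith
    calc (t - w)⁻¹ * (max (g w) 0 - max (g t) 0)
        ≤ (t - w)⁻¹ * max (g w - g t) 0 :=
          mul_le_mul_of_nonneg_left hle (by positivity)
      _ = max ((t - w)⁻¹ * (g w - g t)) 0 := by
          rw [mul_max_of_nonneg _ _ (by positivity : (0:ℝ) ≤ (t-w)⁻¹), mul_zero]
      _ < max (-dg) 0 + η := by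
          rw [← hsl] at *
          exact max_lt (by linarith [le_max_left (-dg) 0]) (by linarith [le_max_right (-dg) 0])


lemma gronwall_pair {T : ℝ} {x y dx dy : ℝ → ℝ} {K : ℝ} (hK : 0 ≤ K)
    (hx : ∀ t ∈ Icc (0:ℝ) T, HasDerivAt x (dx t) t)
    (hy : ∀ t ∈ Icc (0:ℝ) T, HasDerivAt y (dy t) t)
    (hxT : x T ≤ 0) (hyT : y T ≤ 0)
    (hbx : ∀ t ∈ Icc (0:ℝ) T, 0 ≤ x t → -dx t ≤ K * (max (x t) 0 + max (y t) 0))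
    (hby : ∀ t ∈ Icc (0:ℝ) T, 0 ≤ y t → -dy t ≤ K * (max (x t) 0 + max (y t) 0)) :
    ∀ t ∈ Icc (0:ℝ) T, x t ≤ 0 ∧ y t ≤ 0 := by
  rcases lt_or_ge T 0 with hT | hT
  · intro t ht; exact absurd (ht.1.trans ht.2) (not_le.2 hT)
  set f : ℝ → ℝ := fun s => max (x (T - s)) 0 + max (y (T - s)) 0 with hf
  set f' : ℝ → ℝ := fun s => (if 0 ≤ x (T - s) then max (-dx (T - s)) 0 else 0)
      + (if 0 ≤ y (T - s) then max (-dy (T - s)) 0 else 0) with hf'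
  have hsub : ∀ s ∈ Icc (0:ℝ) T, T - s ∈ Icc (0:ℝ) T := by
    intro s hs; exact ⟨by linarith [hs.2], by linarith [hs.1]⟩
  have hcont : ContinuousOn f (Icc 0 T) := by
    intro s hs
    have cx : ContinuousAt (fun s => x (T - s)) s :=
      (hx _ (hsub s hs)).continuousAt.comp ((continuous_const.sub continuous_id).continuousAt)
    have cy : ContinuousAt (fun s => y (T - s)) s :=
      (hy _ (hsub s hs)).continuousAt.comp ((continuous_const.sub continuous_id).continuousAt)
    exact (ContinuousAt.add (ContinuousAt.sup cx continuousAt_const)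
      (ContinuousAt.sup cy continuousAt_const)).continuousWithinAt
  have hmap : ∀ s : ℝ, Tendsto (fun z => T - z) (𝓝[>] s) (𝓝[<] (T - s)) := by
    intro s
    apply tendsto_nhdsWithin_of_tendsto_nhds_of_eventually_within
    · exact ((continuous_const.sub continuous_id).tendsto s).mono_left nhdsWithin_le_nhds
    · filter_upwards [self_mem_nhdsWithin] with z hz
      simp only [mem_Ioi] at hz; simp only [mem_Iio]; linarith
  have hslope : ∀ s ∈ Ico (0:ℝ) T, ∀ r, f' s < r →
      ∃ᶠ z in 𝓝[>] s, (z - s)⁻¹ * (f z - f s) < r := by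
    intro s hs r hr
    obtain ⟨η, hηpos, hηr⟩ : ∃ η, 0 < η ∧ (f' s + 2 * η = r) :=
      ⟨(r - f' s) / 2, div_pos (sub_pos.2 hr) two_pos, by ring⟩
    have h1 := slope_posPart_aux (hx _ (hsub s ⟨hs.1, hs.2.le⟩)) hηpos
    have h2 := slope_posPart_aux (hy _ (hsub s ⟨hs.1, hs.2.le⟩)) hηpos
    have h3 := (hmap s).eventually h1
    have h4 := (hmap s).eventually h2
    apply Filter.Eventually.frequently
    filter_upwards [h3, h4, self_mem_nhdsWithin] with z hz1 hz2 hz3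
    simp only [mem_Ioi] at hz3
    have hzs : z - s = (T - s) - (T - z) := by ring
    have : (z - s)⁻¹ * (f z - f s)
        = ((T - s) - (T - z))⁻¹ * (max (x (T - z)) 0 - max (x (T - s)) 0)
          + ((T - s) - (T - z))⁻¹ * (max (y (T - z)) 0 - max (y (T - s)) 0) := by
      rw [← hzs, hf]; ring
    rw [this]
    have := add_lt_add hz1 hz2
    calc _ < ((if 0 ≤ x (T - s) then max (-dx (T - s)) 0 else 0) + η)
        + ((if 0 ≤ y (T - s) then max (-dy (T - s)) 0 else 0) + η) := add_lt_add hz1 hz2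
      _ = f' s + 2 * η := by rw [hf']; ring
      _ = r := hηr
  have hbound : ∀ s ∈ Ico (0:ℝ) T, f' s ≤ 2 * K * f s + 0 := by
    intro s hs
    have hts : T - s ∈ Icc (0:ℝ) T := hsub s ⟨hs.1, hs.2.le⟩
    have hu : 0 ≤ f s := add_nonneg (le_max_right _ _) (le_max_right _ _)
    have hKu : 0 ≤ K * f s := mul_nonneg hK hu
    have p1 : (if 0 ≤ x (T - s) then max (-dx (T - s)) 0 else 0) ≤ K * f s := by
      split_ifs with h
      · have := hbx _ hts h
        exact max_le (by simpa [hf] using this) hKu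
      · exact hKu
    have p2 : (if 0 ≤ y (T - s) then max (-dy (T - s)) 0 else 0) ≤ K * f s := by
      split_ifs with h
      · have := hby _ hts h
        exact max_le (by simpa [hf] using this) hKu
      · exact hKu
    simp only [hf', add_zero]
    calc _ ≤ K * f s + K * f s := add_le_add p1 p2
      _ = 2 * K * f s := by ring
  have hterm : f 0 ≤ (0:ℝ) := by
    simp only [hf, sub_zero]
    rw [max_eq_right hxT, max_eq_right hyT]; norm_num
  have hbdd := le_gronwallBound_of_liminf_deriv_right_le (δ := 0) (K := 2 * K) (ε := 0)
    hcont hslope hterm hbound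
  intro t ht
  have hst : T - t ∈ Icc (0:ℝ) T := hsub t ht
  have := hbdd (T - t) hst
  rw [gronwallBound_ε0, zero_mul] at this
  have hfx : f (T - t) = max (x t) 0 + max (y t) 0 := by
    simp only [hf, sub_sub_cancel]
  rw [hfx] at this
  have h1 : max (x t) 0 ≤ 0 := by linarith [le_max_right (y t) 0]
  have h2 : max (y t) 0 ≤ 0 := by linarith [le_max_right (x t) 0]
  exact ⟨le_trans (le_max_left _ _) h1, le_trans (le_max_left _ _) h2⟩

end FeedbackAux

set_option maxHeartbeats 3000000 in
/-- Assume `β_t + γ̇_t > 0` on `[0,T]`. If `θ ≤ 0` (momentum) then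
`h_t := −ε_t⁻¹(D_t + λ_t E_t) ≥ 0` on `[0,T]`; if `θ ≥ 0` (reversion) then `h_t ≤ 0`. -/
theorem feedback_h_sign (P : Params)
    (hstrong : ∀ t ∈ Icc (0:ℝ) P.T, 0 < P.beta t + gammaDot P t)
    (A B C D E F K : ℝ → ℝ) (hsol : IsRiccatiSol P A B C D E F K) :
    ((∀ t ∈ Icc (0:ℝ) P.T, P.theta t ≤ 0) →
        ∀ t ∈ Icc (0:ℝ) P.T, 0 ≤ -(P.eps t)⁻¹ * (D t + P.lam t * E t)) ∧
    ((∀ t ∈ Icc (0:ℝ) P.T, 0 ≤ P.theta t) →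
        ∀ t ∈ Icc (0:ℝ) P.T, -(P.eps t)⁻¹ * (D t + P.lam t * E t) ≤ 0) := by
  obtain ⟨hA, hAT, hB, hBT, hC, hCT, hD, hDT, hE, hET, hF, hFT, hK, hKT⟩ := hsol
  clear hF hFT hK hKT
  obtain ⟨Mβ, hMβ⟩ := P.hbeta_bdd
  obtain ⟨Mθ, hMθ⟩ := P.htheta_bdd
  obtain ⟨cε, hcε, hεlb⟩ := P.heps_lb
  obtain ⟨cl, hcl, hllb⟩ := P.hlam_lb
  obtain ⟨Ml, hMl⟩ := P.hlam_ub
  obtain ⟨Ml', hMl'⟩ := P.hlam'_bdd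
  have h0T : (0:ℝ) ∈ Icc (0:ℝ) P.T := ⟨le_refl 0, P.hT.le⟩
  have hTT : P.T ∈ Icc (0:ℝ) P.T := ⟨P.hT.le, le_refl _⟩
  have hεpos : ∀ t ∈ Icc (0:ℝ) P.T, 0 < P.eps t := fun t ht => hcε.trans_le (hεlb t ht)
  have hlpos : ∀ t ∈ Icc (0:ℝ) P.T, 0 < P.lam t := fun t ht => hcl.trans_le (hllb t ht)
  have hεinv : ∀ t ∈ Icc (0:ℝ) P.T, |(P.eps t)⁻¹| ≤ cε⁻¹ := by
    intro t ht
    rw [abs_of_pos (inv_pos.2 (hεpos t ht))]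
    exact inv_anti₀ hcε (hεlb t ht)
  have hlabs : ∀ t ∈ Icc (0:ℝ) P.T, |P.lam t| ≤ Ml := fun t ht => by
    rw [abs_of_pos (hlpos t ht)]; exact hMl t ht
  have hγ : ∀ t ∈ Icc (0:ℝ) P.T, |gammaDot P t| ≤ Ml' / cl := by
    intro t ht
    rw [gammaDot, abs_div, abs_of_pos (hlpos t ht)]
    exact div_le_div₀ ((abs_nonneg _).trans (hMl' t)) (hMl' t) hcl (hllb t ht)
  -- continuity
  have hcl' : Continuous P.lam := continuous_iff_continuousAt.2 fun t => (P.hlam_deriv t).continuousAt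
  have hcontA : ContinuousOn A (Icc (0:ℝ) P.T) :=
    fun t ht => (hA t ht).continuousAt.continuousWithinAt
  have hcontB : ContinuousOn B (Icc (0:ℝ) P.T) :=
    fun t ht => (hB t ht).continuousAt.continuousWithinAt
  have hcontC : ContinuousOn C (Icc (0:ℝ) P.T) :=
    fun t ht => (hC t ht).continuousAt.continuousWithinAt
  have bddOf : ∀ g : ℝ → ℝ, ContinuousOn g (Icc (0:ℝ) P.T) →
      ∃ M, 0 ≤ M ∧ ∀ t ∈ Icc (0:ℝ) P.T, |g t| ≤ M := by
    intro g hg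
    obtain ⟨M, hM⟩ := isCompact_Icc.exists_bound_of_continuousOn hg
    exact ⟨max M 0, le_max_right _ _, fun t ht => by
      have h2 := hM t ht
      rw [Real.norm_eq_abs] at h2
      exact h2.trans (le_max_left _ _)⟩
  obtain ⟨CS, hCS0, hCS⟩ := bddOf (fun t => A t + P.lam t * B t)
    (hcontA.add (hcl'.continuousOn.mul hcontB))
  obtain ⟨CH, hCH0, hCH⟩ := bddOf (fun t => B t + P.lam t * C t)
    (hcontB.add (hcl'.continuousOn.mul hcontC))
  have hCS' : ∀ t ∈ Icc (0:ℝ) P.T, |A t + P.lam t * B t| ≤ CS := hCS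
  have hCH' : ∀ t ∈ Icc (0:ℝ) P.T, |B t + P.lam t * C t| ≤ CH := hCH
  -- coefficient bounds
  have hba : ∀ t ∈ Icc (0:ℝ) P.T, |(P.eps t)⁻¹ * (A t + P.lam t * B t)| ≤ cε⁻¹ * CS :=
    fun t ht => abs_mul_le (hεinv t ht) (hCS' t ht)
  have hblb : ∀ t ∈ Icc (0:ℝ) P.T,
      |(P.eps t)⁻¹ * P.lam t * (B t + P.lam t * C t)| ≤ cε⁻¹ * Ml * CH :=
    fun t ht => abs_mul_le (abs_mul_le (hεinv t ht) (hlabs t ht)) (hCH' t ht)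
  have hbb : ∀ t ∈ Icc (0:ℝ) P.T, |(P.eps t)⁻¹ * (B t + P.lam t * C t)| ≤ cε⁻¹ * CH :=
    fun t ht => abs_mul_le (hεinv t ht) (hCH' t ht)
  -- nonnegativity of the constants
  have nn1 : 0 ≤ cε⁻¹ * CS := mul_nonneg (inv_nonneg.2 hcε.le) hCS0
  have nn2 : 0 ≤ cε⁻¹ * Ml * CH :=
    mul_nonneg (mul_nonneg (inv_nonneg.2 hcε.le) ((abs_nonneg _).trans (hlabs 0 h0T))) hCH0
  have nn3 : 0 ≤ cε⁻¹ * CH := mul_nonneg (inv_nonneg.2 hcε.le) hCH0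
  have nn4 : 0 ≤ Mβ := (abs_nonneg _).trans (hMβ 0 h0T)
  have nn5 : 0 ≤ Ml' / cl := div_nonneg ((abs_nonneg _).trans (hMl' 0)) hcl.le
  have nn6 : 0 ≤ Mβ * Ml := mul_nonneg nn4 ((abs_nonneg _).trans (hlabs 0 h0T))
  have nn7 : 0 ≤ Ml' := (abs_nonneg _).trans (hMl' 0)
  have nn8 : 0 ≤ Mθ := (abs_nonneg _).trans (hMθ 0 h0T)
  obtain ⟨Kb, hKb⟩ : ∃ Kb : ℝ,
      Kb = cε⁻¹ * CS + cε⁻¹ * Ml * CH + cε⁻¹ * CH + Mβ + Ml' / cl + Mβ * Ml + Ml' + Mθ :=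
    ⟨_, rfl⟩
  have hKb0 : 0 ≤ Kb := by rw [hKb]; linarith
  -- the q coefficient
  have hqfacts : ∀ t ∈ Icc (0:ℝ) P.T,
      0 ≤ P.beta t * P.lam t + P.lam' t ∧ P.beta t * P.lam t + P.lam' t ≤ Mβ * Ml + Ml' := by
    intro t ht
    have h1 := hstrong t ht
    have hlp := hlpos t ht
    have hge : (P.beta t + gammaDot P t) * P.lam t = P.beta t * P.lam t + P.lam' t := by
      simp only [gammaDot]
      field_simp
    constructor
    · nlinarith [mul_pos h1 hlp]
    · have hub : |P.beta t * P.lam t + P.lam' t| ≤ Mβ * Ml + Ml' :=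
        (abs_add_le _ _).trans (add_le_add (abs_mul_le (hMβ t ht) (hlabs t ht)) (hMl' t))
      exact (le_abs_self _).trans hub
  have hβγub : ∀ t ∈ Icc (0:ℝ) P.T, P.beta t + gammaDot P t ≤ Mβ + Ml' / cl := fun t ht =>
    add_le_add ((le_abs_self _).trans (hMβ t ht)) ((le_abs_self _).trans (hγ t ht))
  -- nice-form derivatives
  have hH' : ∀ t ∈ Icc (0:ℝ) P.T, HasDerivAt (fun s => B s + P.lam s * C s)
      (((P.eps t)⁻¹ * (A t + P.lam t * B t) + (P.eps t)⁻¹ * P.lam t * (B t + P.lam t * C t)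
          + P.beta t) * (B t + P.lam t * C t)
        + (P.beta t + gammaDot P t) * (P.lam t * C t - 1) - P.beta t) t := by
    intro t ht
    have h := (hB t ht).add ((P.hlam_deriv t).mul (hC t ht))
    refine h.congr_deriv ?_
    have hl : P.lam t ≠ 0 := ne_of_gt (hlpos t ht)
    simp only [gammaDot]
    field_simp
    ring
  have hJ' : ∀ t ∈ Icc (0:ℝ) P.T, HasDerivAt (fun s => P.lam s * C s - 1)
      ((P.eps t)⁻¹ * P.lam t * (B t + P.lam t * C t) ^ 2
        + (2 * P.beta t + gammaDot P t) * (P.lam t * C t - 1)) t := by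
    intro t ht
    have h := ((P.hlam_deriv t).mul (hC t ht)).sub_const 1
    refine h.congr_deriv ?_
    have hl : P.lam t ≠ 0 := ne_of_gt (hlpos t ht)
    simp only [gammaDot]
    field_simp
    ring
  have hGt' : ∀ t ∈ Icc (0:ℝ) P.T, HasDerivAt (fun s => (A s - D s) + P.lam s * (B s - E s))
      (((P.eps t)⁻¹ * (A t + P.lam t * B t) + (P.eps t)⁻¹ * P.lam t * (B t + P.lam t * C t)
          + P.theta t) * ((A t - D t) + P.lam t * (B t - E t))
        + (P.beta t * P.lam t + P.lam' t) * (B t - E t)) t := by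
    intro t ht
    have h := ((hA t ht).sub (hD t ht)).add ((P.hlam_deriv t).mul ((hB t ht).sub (hE t ht)))
    refine h.congr_deriv ?_
    simp only [Pi.sub_apply]
    ring
  have hEt' : ∀ t ∈ Icc (0:ℝ) P.T, HasDerivAt (fun s => B s - E s)
      ((P.eps t)⁻¹ * (B t + P.lam t * C t) * ((A t - D t) + P.lam t * (B t - E t))
        + (P.theta t + P.beta t) * (B t - E t)) t := by
    intro t ht
    have h := (hB t ht).sub (hE t ht)
    refine h.congr_deriv ?_
    ring
  have hG' : ∀ t ∈ Icc (0:ℝ) P.T, HasDerivAt (fun s => D s + P.lam s * E s)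
      (((P.eps t)⁻¹ * (A t + P.lam t * B t) + (P.eps t)⁻¹ * P.lam t * (B t + P.lam t * C t))
          * (D t + P.lam t * E t)
        - P.theta t * ((A t - D t) + P.lam t * (B t - E t))
        + (P.beta t * P.lam t + P.lam' t) * E t) t := by
    intro t ht
    have h := (hD t ht).add ((P.hlam_deriv t).mul (hE t ht))
    refine h.congr_deriv ?_
    ring
  ---------------------------------------------------------------- step 1
  have step1 : ∀ t ∈ Icc (0:ℝ) P.T,
      -(B t + P.lam t * C t) ≤ 0 ∧ P.lam t * C t - 1 ≤ 0 := by
    apply gronwall_pair (K := Kb)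
      (x := fun t => -(B t + P.lam t * C t)) (y := fun t => P.lam t * C t - 1)
      (dx := fun t => -(((P.eps t)⁻¹ * (A t + P.lam t * B t)
          + (P.eps t)⁻¹ * P.lam t * (B t + P.lam t * C t) + P.beta t) * (B t + P.lam t * C t)
        + (P.beta t + gammaDot P t) * (P.lam t * C t - 1) - P.beta t))
      (dy := fun t => (P.eps t)⁻¹ * P.lam t * (B t + P.lam t * C t) ^ 2
        + (2 * P.beta t + gammaDot P t) * (P.lam t * C t - 1)) hKb0
    · intro t ht; exact (hH' t ht).neg
    · intro t ht; exact hJ' t ht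
    · show -(B P.T + P.lam P.T * C P.T) ≤ 0
      rw [hBT, hCT, mul_inv_cancel₀ (ne_of_gt (hlpos _ hTT))]
      norm_num
    · show P.lam P.T * C P.T - 1 ≤ 0
      rw [hCT, mul_inv_cancel₀ (ne_of_gt (hlpos _ hTT))]
      norm_num
    · intro t ht hx0
      have hx0' : 0 ≤ -(B t + P.lam t * C t) := hx0
      have hP1 : |(P.eps t)⁻¹ * (A t + P.lam t * B t)
          + (P.eps t)⁻¹ * P.lam t * (B t + P.lam t * C t) + P.beta t| ≤ Kb := by
        refine ((abs_add_le _ _).trans (add_le_add ((abs_add_le _ _).trans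
          (add_le_add (hba t ht) (hblb t ht))) (hMβ t ht))).trans ?_
        rw [hKb]; linarith
      have hw : |B t + P.lam t * C t| ≤ max (-(B t + P.lam t * C t)) 0 := by
        rw [abs_of_nonpos (by linarith)]
        exact le_max_left _ _
      have e1 := aux_mul_le hP1 hw
      have e2 : (P.beta t + gammaDot P t) * (P.lam t * C t - 1)
          ≤ Kb * max (P.lam t * C t - 1) 0 := by
        refine aux_mul_le' (hstrong t ht).le ((hβγub t ht).trans ?_) (le_max_left _ _)
          (le_max_right _ _)
        rw [hKb]; linarith
      have e3 := P.hbeta_pos t ht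
      show -(-(((P.eps t)⁻¹ * (A t + P.lam t * B t)
          + (P.eps t)⁻¹ * P.lam t * (B t + P.lam t * C t) + P.beta t) * (B t + P.lam t * C t)
        + (P.beta t + gammaDot P t) * (P.lam t * C t - 1) - P.beta t))
        ≤ Kb * (max (-(B t + P.lam t * C t)) 0 + max (P.lam t * C t - 1) 0)
      rw [neg_neg]
      linarith
    · intro t ht hy0
      have hy0' : (0:ℝ) ≤ P.lam t * C t - 1 := hy0
      have t1 : 0 ≤ (P.eps t)⁻¹ * P.lam t * (B t + P.lam t * C t) ^ 2 :=
        mul_nonneg (mul_nonneg (inv_nonneg.2 (hεpos t ht).le) (hlpos t ht).le) (sq_nonneg _)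
      have t2 : 0 ≤ (2 * P.beta t + gammaDot P t) * (P.lam t * C t - 1) := by
        have := P.hnoarb t ht
        simp only [gammaDot]
        exact mul_nonneg (by linarith) hy0'
      have hrhs : 0 ≤ Kb * (max (-(B t + P.lam t * C t)) 0 + max (P.lam t * C t - 1) 0) :=
        mul_nonneg hKb0 (add_nonneg (le_max_right _ _) (le_max_right _ _))
      show -((P.eps t)⁻¹ * P.lam t * (B t + P.lam t * C t) ^ 2
          + (2 * P.beta t + gammaDot P t) * (P.lam t * C t - 1))
          ≤ Kb * (max (-(B t + P.lam t * C t)) 0 + max (P.lam t * C t - 1) 0)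
      linarith
  have hHpos : ∀ t ∈ Icc (0:ℝ) P.T, 0 ≤ B t + P.lam t * C t := by
    intro t ht
    have h := (step1 t ht).1
    linarith
  have hb0 : ∀ t ∈ Icc (0:ℝ) P.T, 0 ≤ (P.eps t)⁻¹ * (B t + P.lam t * C t) :=
    fun t ht => mul_nonneg (inv_nonneg.2 (hεpos t ht).le) (hHpos t ht)
  have hbK : ∀ t ∈ Icc (0:ℝ) P.T, (P.eps t)⁻¹ * (B t + P.lam t * C t) ≤ Kb := by
    intro t ht
    refine ((le_abs_self _).trans (hbb t ht)).trans ?_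
    rw [hKb]; linarith
  ---------------------------------------------------------------- step 2
  have step2 : ∀ t ∈ Icc (0:ℝ) P.T,
      -((A t - D t) + P.lam t * (B t - E t)) ≤ 0 ∧ B t - E t ≤ 0 := by
    apply gronwall_pair (K := Kb)
      (x := fun t => -((A t - D t) + P.lam t * (B t - E t))) (y := fun t => B t - E t)
      (dx := fun t => -(((P.eps t)⁻¹ * (A t + P.lam t * B t)
          + (P.eps t)⁻¹ * P.lam t * (B t + P.lam t * C t) + P.theta t)
            * ((A t - D t) + P.lam t * (B t - E t))
        + (P.beta t * P.lam t + P.lam' t) * (B t - E t)))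
      (dy := fun t => (P.eps t)⁻¹ * (B t + P.lam t * C t)
            * ((A t - D t) + P.lam t * (B t - E t))
        + (P.theta t + P.beta t) * (B t - E t)) hKb0
    · intro t ht; exact (hGt' t ht).neg
    · intro t ht; exact hEt' t ht
    · show -((A P.T - D P.T) + P.lam P.T * (B P.T - E P.T)) ≤ 0
      rw [hAT, hBT, hDT, hET]
      ring_nf
      norm_num
    · show B P.T - E P.T ≤ 0
      rw [hBT, hET]; norm_num
    · intro t ht hx0
      have hx0' : 0 ≤ -((A t - D t) + P.lam t * (B t - E t)) := hx0
      have hP2 : |(P.eps t)⁻¹ * (A t + P.lam t * B t)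
          + (P.eps t)⁻¹ * P.lam t * (B t + P.lam t * C t) + P.theta t| ≤ Kb := by
        refine ((abs_add_le _ _).trans (add_le_add ((abs_add_le _ _).trans
          (add_le_add (hba t ht) (hblb t ht))) (hMθ t ht))).trans ?_
        rw [hKb]; linarith
      have hw : |(A t - D t) + P.lam t * (B t - E t)|
          ≤ max (-((A t - D t) + P.lam t * (B t - E t))) 0 := by
        rw [abs_of_nonpos (by linarith)]
        exact le_max_left _ _
      have e1 := aux_mul_le hP2 hw
      have e2 : (P.beta t * P.lam t + P.lam' t) * (B t - E t)
          ≤ Kb * max (B t - E t) 0 := by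
        refine aux_mul_le' (hqfacts t ht).1 ((hqfacts t ht).2.trans ?_) (le_max_left _ _)
          (le_max_right _ _)
        rw [hKb]; linarith
      show -(-(((P.eps t)⁻¹ * (A t + P.lam t * B t)
          + (P.eps t)⁻¹ * P.lam t * (B t + P.lam t * C t) + P.theta t)
            * ((A t - D t) + P.lam t * (B t - E t))
        + (P.beta t * P.lam t + P.lam' t) * (B t - E t)))
        ≤ Kb * (max (-((A t - D t) + P.lam t * (B t - E t))) 0 + max (B t - E t) 0)
      rw [neg_neg]
      linarith
    · intro t ht hy0
      have hy0' : (0:ℝ) ≤ B t - E t := hy0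
      have e1 : (P.eps t)⁻¹ * (B t + P.lam t * C t)
          * (-((A t - D t) + P.lam t * (B t - E t)))
          ≤ Kb * max (-((A t - D t) + P.lam t * (B t - E t))) 0 :=
        aux_mul_le' (hb0 t ht) (hbK t ht) (le_max_left _ _) (le_max_right _ _)
      have e2 : -((P.theta t + P.beta t) * (B t - E t)) ≤ Kb * max (B t - E t) 0 := by
        have h1 : -((P.theta t + P.beta t) * (B t - E t))
            = (-(P.theta t + P.beta t)) * (B t - E t) := by ring
        rw [h1]
        refine aux_mul_le ?_ (by rw [abs_of_nonneg hy0']; exact le_max_left _ _)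
        rw [abs_neg]
        refine ((abs_add_le _ _).trans (add_le_add (hMθ t ht) (hMβ t ht))).trans ?_
        rw [hKb]; linarith
      show -((P.eps t)⁻¹ * (B t + P.lam t * C t)
            * ((A t - D t) + P.lam t * (B t - E t))
          + (P.theta t + P.beta t) * (B t - E t))
        ≤ Kb * (max (-((A t - D t) + P.lam t * (B t - E t))) 0 + max (B t - E t) 0)
      nlinarith [e1, e2]
  have hGtpos : ∀ t ∈ Icc (0:ℝ) P.T, 0 ≤ (A t - D t) + P.lam t * (B t - E t) := by
    intro t ht; have h := (step2 t ht).1; linarith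
  have hEtneg : ∀ t ∈ Icc (0:ℝ) P.T, B t - E t ≤ 0 := fun t ht => (step2 t ht).2
  have halb : ∀ t ∈ Icc (0:ℝ) P.T, |(P.eps t)⁻¹ * (A t + P.lam t * B t)
      + (P.eps t)⁻¹ * P.lam t * (B t + P.lam t * C t)| ≤ Kb := by
    intro t ht
    refine ((abs_add_le _ _).trans (add_le_add (hba t ht) (hblb t ht))).trans ?_
    rw [hKb]; linarith
  have hqK : ∀ t ∈ Icc (0:ℝ) P.T, P.beta t * P.lam t + P.lam' t ≤ Kb := by
    intro t ht
    refine (hqfacts t ht).2.trans ?_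
    rw [hKb]; linarith
  constructor
  ---------------------------------------------------------------- θ ≤ 0
  · intro hθ
    have step3 : ∀ t ∈ Icc (0:ℝ) P.T, D t + P.lam t * E t ≤ 0 ∧ -(E t) ≤ 0 := by
      apply gronwall_pair (K := Kb)
        (x := fun t => D t + P.lam t * E t) (y := fun t => -(E t))
        (dx := fun t => ((P.eps t)⁻¹ * (A t + P.lam t * B t)
            + (P.eps t)⁻¹ * P.lam t * (B t + P.lam t * C t)) * (D t + P.lam t * E t)
          - P.theta t * ((A t - D t) + P.lam t * (B t - E t))
          + (P.beta t * P.lam t + P.lam' t) * E t)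
        (dy := fun t => -((P.eps t)⁻¹ * (B t + P.lam t * C t) * (D t + P.lam t * E t)
          - P.theta t * (B t - E t) + P.beta t * E t)) hKb0
      · intro t ht; exact hG' t ht
      · intro t ht; exact (hE t ht).neg
      · show D P.T + P.lam P.T * E P.T ≤ 0
        rw [hDT, hET]; norm_num
      · show -(E P.T) ≤ 0
        rw [hET]; norm_num
      · intro t ht hx0
        have hx0' : (0:ℝ) ≤ D t + P.lam t * E t := hx0
        have e1 : (-((P.eps t)⁻¹ * (A t + P.lam t * B t)
            + (P.eps t)⁻¹ * P.lam t * (B t + P.lam t * C t))) * (D t + P.lam t * E t)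
            ≤ Kb * max (D t + P.lam t * E t) 0 := by
          refine aux_mul_le ?_ (by rw [abs_of_nonneg hx0']; exact le_max_left _ _)
          rw [abs_neg]; exact halb t ht
        have e2 : P.theta t * ((A t - D t) + P.lam t * (B t - E t)) ≤ 0 := by
          have := mul_nonneg (neg_nonneg.2 (hθ t ht)) (hGtpos t ht)
          nlinarith
        have e3 : (P.beta t * P.lam t + P.lam' t) * (-(E t)) ≤ Kb * max (-(E t)) 0 :=
          aux_mul_le' (hqfacts t ht).1 (hqK t ht) (le_max_left _ _) (le_max_right _ _)
        show -(((P.eps t)⁻¹ * (A t + P.lam t * B t)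
            + (P.eps t)⁻¹ * P.lam t * (B t + P.lam t * C t)) * (D t + P.lam t * E t)
          - P.theta t * ((A t - D t) + P.lam t * (B t - E t))
          + (P.beta t * P.lam t + P.lam' t) * E t)
          ≤ Kb * (max (D t + P.lam t * E t) 0 + max (-(E t)) 0)
        nlinarith [e1, e2, e3]
      · intro t ht hy0
        have hy0' : (0:ℝ) ≤ -(E t) := hy0
        have e1 : (P.eps t)⁻¹ * (B t + P.lam t * C t) * (D t + P.lam t * E t)
            ≤ Kb * max (D t + P.lam t * E t) 0 :=
          aux_mul_le' (hb0 t ht) (hbK t ht) (le_max_left _ _) (le_max_right _ _)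
        have e2 : -(P.theta t * (B t - E t)) ≤ 0 := by
          have := mul_nonneg (neg_nonneg.2 (hθ t ht)) (neg_nonneg.2 (hEtneg t ht))
          nlinarith
        have e3 : P.beta t * E t ≤ 0 := by
          have := mul_nonneg (P.hbeta_pos t ht).le hy0'
          nlinarith
        show -(-((P.eps t)⁻¹ * (B t + P.lam t * C t) * (D t + P.lam t * E t)
            - P.theta t * (B t - E t) + P.beta t * E t))
          ≤ Kb * (max (D t + P.lam t * E t) 0 + max (-(E t)) 0)
        rw [neg_neg]
        nlinarith [e1, e2, e3, mul_nonneg hKb0 (le_max_right (-(E t)) (0:ℝ))]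
    intro t ht
    have hG := (step3 t ht).1
    have hi : (0:ℝ) ≤ (P.eps t)⁻¹ := inv_nonneg.2 (hεpos t ht).le
    nlinarith [mul_nonneg hi (neg_nonneg.2 hG)]
  ---------------------------------------------------------------- θ ≥ 0
  · intro hθ
    have step3 : ∀ t ∈ Icc (0:ℝ) P.T, -(D t + P.lam t * E t) ≤ 0 ∧ E t ≤ 0 := by
      apply gronwall_pair (K := Kb)
        (x := fun t => -(D t + P.lam t * E t)) (y := fun t => E t)
        (dx := fun t => -(((P.eps t)⁻¹ * (A t + P.lam t * B t)
            + (P.eps t)⁻¹ * P.lam t * (B t + P.lam t * C t)) * (D t + P.lam t * E t)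
          - P.theta t * ((A t - D t) + P.lam t * (B t - E t))
          + (P.beta t * P.lam t + P.lam' t) * E t))
        (dy := fun t => (P.eps t)⁻¹ * (B t + P.lam t * C t) * (D t + P.lam t * E t)
          - P.theta t * (B t - E t) + P.beta t * E t) hKb0
      · intro t ht; exact (hG' t ht).neg
      · intro t ht; exact hE t ht
      · show -(D P.T + P.lam P.T * E P.T) ≤ 0
        rw [hDT, hET]; norm_num
      · show E P.T ≤ 0
        rw [hET]
      · intro t ht hx0
        have hx0' : (0:ℝ) ≤ -(D t + P.lam t * E t) := hx0
        have e1 : ((P.eps t)⁻¹ * (A t + P.lam t * B t)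
            + (P.eps t)⁻¹ * P.lam t * (B t + P.lam t * C t)) * (D t + P.lam t * E t)
            ≤ Kb * max (-(D t + P.lam t * E t)) 0 := by
          refine aux_mul_le (halb t ht) ?_
          rw [abs_of_nonpos (by linarith)]
          exact le_max_left _ _
        have e2 : -(P.theta t * ((A t - D t) + P.lam t * (B t - E t))) ≤ 0 := by
          have := mul_nonneg (hθ t ht) (hGtpos t ht)
          nlinarith
        have e3 : (P.beta t * P.lam t + P.lam' t) * E t ≤ Kb * max (E t) 0 :=
          aux_mul_le' (hqfacts t ht).1 (hqK t ht) (le_max_left _ _) (le_max_right _ _)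
        show -(-(((P.eps t)⁻¹ * (A t + P.lam t * B t)
            + (P.eps t)⁻¹ * P.lam t * (B t + P.lam t * C t)) * (D t + P.lam t * E t)
          - P.theta t * ((A t - D t) + P.lam t * (B t - E t))
          + (P.beta t * P.lam t + P.lam' t) * E t))
          ≤ Kb * (max (-(D t + P.lam t * E t)) 0 + max (E t) 0)
        rw [neg_neg]
        nlinarith [e1, e2, e3]
      · intro t ht hy0
        have hy0' : (0:ℝ) ≤ E t := hy0
        have e1 : (P.eps t)⁻¹ * (B t + P.lam t * C t) * (-(D t + P.lam t * E t))
            ≤ Kb * max (-(D t + P.lam t * E t)) 0 :=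
          aux_mul_le' (hb0 t ht) (hbK t ht) (le_max_left _ _) (le_max_right _ _)
        have e2 : P.theta t * (B t - E t) ≤ 0 := by
          have := mul_nonneg (hθ t ht) (neg_nonneg.2 (hEtneg t ht))
          nlinarith
        have e3 : -(P.beta t * E t) ≤ 0 := by
          have := mul_nonneg (P.hbeta_pos t ht).le hy0'
          nlinarith
        show -((P.eps t)⁻¹ * (B t + P.lam t * C t) * (D t + P.lam t * E t)
          - P.theta t * (B t - E t) + P.beta t * E t)
          ≤ Kb * (max (-(D t + P.lam t * E t)) 0 + max (E t) 0)
        nlinarith [e1, e2, e3, mul_nonneg hKb0 (le_max_right (E t) (0:ℝ))]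
    intro t ht
    have hG : 0 ≤ D t + P.lam t * E t := by
      have h := (step3 t ht).1; linarith
    have hi : (0:ℝ) ≤ (P.eps t)⁻¹ := inv_nonneg.2 (hεpos t ht).le
    nlinarith [mul_nonneg hi hG]
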